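/- arXiv:1506.01458 — 2 statements merged into one kernel-verified Lean document; each statement's English description precedes it below -/
import Mathlib

section
/- Let G be a finite group of characteristic p and P a p-subgroup of G. Then the centralizer C_G(P) is of characteristic p. -/
variable (p : ℕ) (G : Type*) [Group G]

/-- `O_p(G)`: the join of all normal `p`-subgroups of `G` (the largest normal `p`-subgroup
when `G` is finite). -/
def pCore : Subgroup G :=
  ⨆ H : {H : Subgroup G // H.Normal ∧ IsPGroup p H}, H.1

/-- `O_{p'}(G)`: the join of all normal subgroups of order coprime to `p` (the largest normal
`p'`-subgroup when `G` is finite). -/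
def pPrimeCore : Subgroup G :=
  ⨆ H : {H : Subgroup G // H.Normal ∧ Nat.Coprime (Nat.card H) p}, H.1

lemma iSup_normal {G : Type*} [Group G] {ι : Sort*} (H : ι → Subgroup G)
    (h : ∀ i, (H i).Normal) : (⨆ i, H i).Normal := by
  constructor
  intro n hn g
  refine Subgroup.iSup_induction (C := fun x => g * x * g⁻¹ ∈ ⨆ i, H i) H hn
    (fun i x hx => ?_) ?_ (fun x y hx hy => ?_)
  · exact Subgroup.mem_iSup_of_mem i ((h i).conj_mem x hx g)
  · simpa using Subgroup.one_mem (⨆ i, H i)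
  · have e : g * (x * y) * g⁻¹ = (g * x * g⁻¹) * (g * y * g⁻¹) := by group
    show g * (x * y) * g⁻¹ ∈ ⨆ i, H i
    rw [e]; exact mul_mem hx hy

instance pCore_normal : (pCore p G).Normal := iSup_normal _ (fun i => i.2.1)

instance pPrimeCore_normal : (pPrimeCore p G).Normal := iSup_normal _ (fun i => i.2.1)

/-- A group `G` is of characteristic `p` if `C_G(O_p(G)) ≤ O_p(G)`. -/
def IsCharP : Prop :=
  Subgroup.centralizer ((pCore p G : Subgroup G) : Set G) ≤ pCore p G

/-- A group `G` is almost of characteristic `p` if `G/O_{p'}(G)` is of characteristic `p`. -/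
def IsAlmostCharP : Prop := IsCharP p (G ⧸ pPrimeCore p G)


open Subgroup
open scoped commutatorElement

lemma mem_normalizer_of_conj {G : Type*} [Group G] {H : Subgroup G} {g : G}
    (h1 : ∀ h ∈ H, g * h * g⁻¹ ∈ H) (h2 : ∀ h ∈ H, g⁻¹ * h * g ∈ H) : g ∈ Subgroup.normalizer (H : Set G) := by
  rw [Subgroup.mem_normalizer_iff]
  intro h
  refine ⟨fun hh => h1 h hh, fun hh => ?_⟩
  have e : g⁻¹ * (g * h * g⁻¹) * g = h := by group
  exact e ▸ h2 _ hh

lemma pxq {G : Type*} [Group G] [Finite G] {p : ℕ} [hp : Fact p.Prime]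
    {P : Subgroup G} (hP : IsPGroup p P) {y : G}
    (hy : Nat.Coprime (orderOf y) p)
    (hyP : ∀ g ∈ P, g * y = y * g) :
    ∀ (n : ℕ) (Q : Subgroup G), Nat.card Q = n → IsPGroup p Q → P ≤ Subgroup.normalizer (Q : Set G) →
      y ∈ Subgroup.normalizer (Q : Set G) →
      Q ⊓ Subgroup.centralizer (P : Set G) ≤ Subgroup.centralizer {y} →
      Q ≤ Subgroup.centralizer {y} := by
  intro n
  induction n using Nat.strong_induction_on with
  | _ n IH =>
  intro Q hcard hQ hPN hyN hC
  by_cases hQD : Q ≤ centralizer {y}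
  · exact hQD
  -- the proper invariant subgroup principle
  have key : ∀ T : Subgroup G, T < Q → P ≤ Subgroup.normalizer (T : Set G) → y ∈ Subgroup.normalizer (T : Set G) →
      T ≤ centralizer {y} := by
    intro T hT hTP hTy
    have hlt : Nat.card T < Nat.card Q := by
      have hsub : (T : Set G) ⊂ (Q : Set G) := by
        refine ⟨by exact_mod_cast hT.le, fun hcon => hT.ne ?_⟩
        exact le_antisymm hT.le (fun x hx => hcon hx)
      calc Nat.card T = (T : Set G).ncard := Nat.card_coe_set_eq _
        _ < (Q : Set G).ncard := Set.ncard_lt_ncard hsub (Set.toFinite _)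
        _ = Nat.card Q := (Nat.card_coe_set_eq _).symm
    subst hcard
    exact IH _ hlt T rfl (hQ.to_le hT.le) hTP hTy
      (le_trans (inf_le_inf_right _ hT.le) hC)
  set D := Q ⊓ centralizer {y} with hDdef
  have hDmem : ∀ z, z ∈ D ↔ z ∈ Q ∧ z * y = y * z := fun z => by
    rw [hDdef, Subgroup.mem_inf, mem_centralizer_singleton_iff]
  have hDQ : D ≤ Q := inf_le_left
  have hDne : ¬ Q ≤ D := fun h => hQD (h.trans inf_le_right)
  -- y centralizes D
  have hDy : ∀ d ∈ D, y * d * y⁻¹ = d := by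
    intro d hd
    have := ((hDmem d).mp hd).2
    rw [← this]; group
  have hDyN : y ∈ Subgroup.normalizer (D : Set G) := by
    refine mem_normalizer_of_conj (fun d hd => ?_) (fun d hd => ?_)
    · rw [hDy d hd]; exact hd
    · have : y * (y⁻¹ * d * y) * y⁻¹ = d := by group
      have h2 := hDy d hd
      -- from y * d * y⁻¹ = d, get y⁻¹ * d * y = d
      have : y⁻¹ * d * y = d := by
        conv_lhs => rw [← h2]
        group
      rw [this]; exact hd
  -- P normalizes D
  have hDP : ∀ g ∈ P, ∀ d ∈ D, g * d * g⁻¹ ∈ D := by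
    intro g hg d hd
    obtain ⟨hd1, hdy⟩ := (hDmem d).mp hd
    refine (hDmem _).mpr ⟨(Subgroup.mem_normalizer_iff.mp (hPN hg) d).mp hd1, ?_⟩
    have hc : g * y = y * g := hyP g hg
    calc g * d * g⁻¹ * y = g * d * (g⁻¹ * y) := by group
    _ = g * d * (y * g⁻¹) := by rw [(Commute.inv_left (show Commute g y from hc) : Commute g⁻¹ y).eq]
    _ = g * (d * y) * g⁻¹ := by group
    _ = g * (y * d) * g⁻¹ := by rw [hdy]
    _ = (g * y) * (d * g⁻¹) := by group
    _ = (y * g) * (d * g⁻¹) := by rw [hc]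
    _ = y * (g * d * g⁻¹) := by group
  have hDP' : ∀ g ∈ P, ∀ d ∈ D, g⁻¹ * d * g ∈ D := fun g hg d hd => by
    simpa using hDP g⁻¹ (inv_mem hg) d hd
  have hDyD : ∀ d ∈ D, y * d * y⁻¹ ∈ D := fun d hd => by rw [hDy d hd]; exact hd
  have hDy'D : ∀ d ∈ D, y⁻¹ * d * y ∈ D := by
    intro d hd
    have h2 := hDy d hd
    have e : y⁻¹ * d * y = d := by
      conv_lhs => rw [← h2]
      group
    rw [e]; exact hd
  -- Step A : D is normal in Q
  have hDnormal : ∀ q ∈ Q, ∀ d ∈ D, q * d * q⁻¹ ∈ D := by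
    by_cases hNQ : Q ≤ Subgroup.normalizer (D : Set G)
    · exact fun q hq d hd => (Subgroup.mem_normalizer_iff.mp (hNQ hq) d).mp hd
    · exfalso
      set N := Q ⊓ Subgroup.normalizer (D : Set G) with hNdef
      have hNlt : N < Q :=
        lt_of_le_of_ne inf_le_left (fun hEq => hNQ (by rw [← hEq]; exact inf_le_right))
      have conj_norm : ∀ c : G, c ∈ Subgroup.normalizer (Q : Set G) → (∀ d ∈ D, c * d * c⁻¹ ∈ D) →
          (∀ d ∈ D, c⁻¹ * d * c ∈ D) → ∀ x ∈ N, c * x * c⁻¹ ∈ N := by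
        intro c hcQ hc1 hc2 x hx
        obtain ⟨hx1, hx2⟩ := Subgroup.mem_inf.mp hx
        refine Subgroup.mem_inf.mpr ⟨(Subgroup.mem_normalizer_iff.mp hcQ x).mp hx1, ?_⟩
        refine mem_normalizer_of_conj (fun d hd => ?_) (fun d hd => ?_)
        · have e : (c*x*c⁻¹) * d * (c*x*c⁻¹)⁻¹ = c * (x * (c⁻¹*d*c) * x⁻¹) * c⁻¹ := by group
          rw [e]
          exact hc1 _ ((Subgroup.mem_normalizer_iff.mp hx2 _).mp (hc2 d hd))
        · have e : (c*x*c⁻¹)⁻¹ * d * (c*x*c⁻¹) = c * (x⁻¹ * (c⁻¹*d*c) * x) * c⁻¹ := by group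
          rw [e]
          have h3 := (Subgroup.mem_normalizer_iff.mp (inv_mem hx2) _).mp (hc2 d hd)
          exact hc1 _ (by simpa using h3)
      have hNP : P ≤ Subgroup.normalizer (N : Set G) := by
        intro g hg
        refine mem_normalizer_of_conj (conj_norm g (hPN hg) (hDP g hg) (hDP' g hg)) ?_
        intro x hx
        have := conj_norm g⁻¹ (hPN (inv_mem hg)) (fun d hd => by simpa using hDP' g hg d hd)
          (fun d hd => by simpa using hDP g hg d hd) x hx
        simpa using this
      have hNyN : y ∈ Subgroup.normalizer (N : Set G) := by
        refine mem_normalizer_of_conj (conj_norm y hyN hDyD hDy'D) ?_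
        intro x hx
        have := conj_norm y⁻¹ (inv_mem hyN) (fun d hd => by simpa using hDy'D d hd)
          (fun d hd => by simpa using hDyD d hd) x hx
        simpa using this
      have hNcent : N ≤ centralizer {y} := key N hNlt hNP hNyN
      -- normalizer condition in the p-group Q
      haveI := hQ.isNilpotent
      have hnc : NormalizerCondition ↥Q := normalizerCondition_of_isNilpotent
      set D2 : Subgroup ↥Q := D.subgroupOf Q with hD2def
      have hD2top : D2 < ⊤ := by
        rcases lt_or_eq_of_le (le_top : D2 ≤ ⊤) with h | h
        · exact h
        · exfalso
          refine hDne (fun q hq => ?_)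
          have hmem : (⟨q, hq⟩ : ↥Q) ∈ D2 := h.symm ▸ Subgroup.mem_top (⟨q, hq⟩ : ↥Q)
          exact Subgroup.mem_subgroupOf.mp hmem
      obtain ⟨u, huN, huD⟩ := SetLike.exists_of_lt (hnc D2 hD2top)
      have huQ : (u : G) ∈ Q := u.2
      have huDnorm : (u : G) ∈ Subgroup.normalizer (D : Set G) := by
        refine mem_normalizer_of_conj (fun d hd => ?_) (fun d hd => ?_)
        · have hdQ : d ∈ Q := hDQ hd
          have h1 : (⟨d, hdQ⟩ : ↥Q) ∈ D2 := Subgroup.mem_subgroupOf.mpr hd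
          have h2 := (Subgroup.mem_normalizer_iff.mp huN _).mp h1
          have h3 := Subgroup.mem_subgroupOf.mp h2
          simpa using h3
        · have hdQ : d ∈ Q := hDQ hd
          have h1 : (⟨d, hdQ⟩ : ↥Q) ∈ D2 := Subgroup.mem_subgroupOf.mpr hd
          have h2 := (Subgroup.mem_normalizer_iff.mp (inv_mem huN) _).mp h1
          have h3 := Subgroup.mem_subgroupOf.mp h2
          simpa using h3
      have huNmem : (u:G) ∈ N := Subgroup.mem_inf.mpr ⟨huQ, huDnorm⟩
      have huDmem : (u:G) ∈ D := Subgroup.mem_inf.mpr ⟨huQ, hNcent huNmem⟩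
      exact huD (Subgroup.mem_subgroupOf.mpr huDmem)
  -- Step B : [Q,P] <= D
  have hD2n : (D.subgroupOf Q).Normal := by
    constructor
    intro d hd q
    refine Subgroup.mem_subgroupOf.mpr ?_
    have := hDnormal (q : G) q.2 (d : G) (Subgroup.mem_subgroupOf.mp hd)
    simpa using this
  haveI := hD2n
  have conjmem : ∀ (g : G), g ∈ Subgroup.normalizer (Q : Set G) → ∀ q : ↥Q, g * (q:G) * g⁻¹ ∈ Q := fun g hg q =>
    (Subgroup.mem_normalizer_iff.mp hg _).mp q.2
  let conjHom : ∀ g : ↥P, ↥Q →* ↥Q := fun g =>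
    { toFun := fun q => ⟨(g:G) * q * (g:G)⁻¹, conjmem g (hPN g.2) q⟩
      map_one' := by ext; simp
      map_mul' := by intro a b; ext; push_cast; group }
  have condmap : ∀ (g : ↥P), D.subgroupOf Q ≤ (D.subgroupOf Q).comap (conjHom g) := by
    intro g d hd
    refine Subgroup.mem_comap.mpr (Subgroup.mem_subgroupOf.mpr ?_)
    show (g:G) * (d:G) * (g:G)⁻¹ ∈ D
    exact hDP _ g.2 _ (Subgroup.mem_subgroupOf.mp hd)
  letI act : MulAction ↥P (↥Q ⧸ D.subgroupOf Q) :=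
    { smul := fun g x => QuotientGroup.map _ _ (conjHom g) (condmap g) x
      one_smul := by
        intro x
        refine QuotientGroup.induction_on x ?_
        intro q
        show QuotientGroup.map _ _ _ _ (QuotientGroup.mk q) = QuotientGroup.mk q
        rw [QuotientGroup.map_mk]
        congr 1
        ext
        simp [conjHom]
      mul_smul := by
        intro a b x
        refine QuotientGroup.induction_on x ?_
        intro q
        show QuotientGroup.map _ _ _ _ (QuotientGroup.mk q)
            = QuotientGroup.map _ _ _ _ (QuotientGroup.map _ _ _ _ (QuotientGroup.mk q))
        rw [QuotientGroup.map_mk, QuotientGroup.map_mk, QuotientGroup.map_mk]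
        congr 1
        ext
        show ((a*b : ↥P) : G) * q * ((a*b : ↥P) : G)⁻¹
            = (a:G) * ((b:G) * q * (b:G)⁻¹) * (a:G)⁻¹
        push_cast
        group }
  haveI : Finite (↥Q ⧸ D.subgroupOf Q) := Quotient.finite _
  have hQbarP : IsPGroup p (↥Q ⧸ D.subgroupOf Q) := hQ.to_quotient _
  have hDltQ : D < Q := lt_of_le_of_ne hDQ (fun h => hDne h.ge)
  obtain ⟨q0, hq0Q, hq0D⟩ := SetLike.exists_of_lt hDltQ
  have hQbarNontriv : Nontrivial (↥Q ⧸ D.subgroupOf Q) := by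
    refine ⟨⟨QuotientGroup.mk ⟨q0, hq0Q⟩, 1, ?_⟩⟩
    rw [Ne, QuotientGroup.eq_one_iff]
    exact fun h => hq0D (Subgroup.mem_subgroupOf.mp h)
  have hpdvd : p ∣ Nat.card (↥Q ⧸ D.subgroupOf Q) := by
    obtain ⟨k, hk0, hk⟩ := (hQbarP.nontrivial_iff_card).mp hQbarNontriv
    rw [hk]
    exact dvd_pow_self p hk0.ne'
  have hmod := hP.card_modEq_card_fixedPoints (↥Q ⧸ D.subgroupOf Q)
  have hFPdvd : p ∣ Nat.card (MulAction.fixedPoints ↥P (↥Q ⧸ D.subgroupOf Q)) :=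
    (Nat.modEq_zero_iff_dvd).mp (hmod.symm.trans ((Nat.modEq_zero_iff_dvd).mpr hpdvd))
  have hone_fixed : (1 : ↥Q ⧸ D.subgroupOf Q) ∈ MulAction.fixedPoints ↥P (↥Q ⧸ D.subgroupOf Q) := by
    intro g
    show QuotientGroup.map _ _ (conjHom g) (condmap g) 1 = 1
    exact map_one _
  have hex : ∃ xbar ∈ MulAction.fixedPoints ↥P (↥Q ⧸ D.subgroupOf Q), xbar ≠ 1 := by
    by_contra hcon
    push_neg at hcon
    haveI hss : Subsingleton (MulAction.fixedPoints ↥P (↥Q ⧸ D.subgroupOf Q)) := by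
      constructor
      rintro ⟨a, ha⟩ ⟨b, hb⟩
      simp only [Subtype.ext_iff]
      rw [hcon a ha, hcon b hb]
    haveI : Inhabited (MulAction.fixedPoints ↥P (↥Q ⧸ D.subgroupOf Q)) := ⟨⟨1, hone_fixed⟩⟩
    haveI : Unique (MulAction.fixedPoints ↥P (↥Q ⧸ D.subgroupOf Q)) := Unique.mk' _
    have hcard1 : Nat.card (MulAction.fixedPoints ↥P (↥Q ⧸ D.subgroupOf Q)) = 1 :=
      Nat.card_unique
    rw [hcard1] at hFPdvd
    exact hp.out.one_lt.ne' (Nat.dvd_one.mp hFPdvd)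
  obtain ⟨xbar, hxfix, hxne⟩ := hex
  obtain ⟨qhat, rfl⟩ := QuotientGroup.mk_surjective xbar
  have hq1Q : (qhat : G) ∈ Q := qhat.2
  have hq1D : (qhat : G) ∉ D := by
    intro hmem
    exact hxne (QuotientGroup.eq_one_iff qhat |>.mpr (Subgroup.mem_subgroupOf.mpr hmem))
  have hq1W : ∀ g ∈ P, (g * (qhat:G) * g⁻¹)⁻¹ * (qhat:G) ∈ D := by
    intro g hg
    have hfix := hxfix ⟨g, hg⟩
    have hfix2 : QuotientGroup.map _ _ (conjHom ⟨g, hg⟩) (condmap _) (QuotientGroup.mk qhat)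
        = QuotientGroup.mk qhat := hfix
    rw [QuotientGroup.map_mk] at hfix2
    have h3 := (QuotientGroup.eq).mp hfix2
    have h4 := Subgroup.mem_subgroupOf.mp h3
    exact h4
  -- the subgroup W
  let W : Subgroup G := {
    carrier := {w | w ∈ Q ∧ ∀ g ∈ P, (g * w * g⁻¹)⁻¹ * w ∈ D}
    one_mem' := ⟨Q.one_mem, fun g hg => by simpa using D.one_mem⟩
    mul_mem' := by
      rintro a b ⟨haQ, ha⟩ ⟨hbQ, hb⟩
      refine ⟨Q.mul_mem haQ hbQ, fun g hg => ?_⟩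
      have hgb : g * b⁻¹ * g⁻¹ ∈ Q := conjmem g (hPN hg) ⟨b⁻¹, Q.inv_mem hbQ⟩
      have e : (g * (a*b) * g⁻¹)⁻¹ * (a*b)
          = ((g*b⁻¹*g⁻¹) * ((g*a*g⁻¹)⁻¹ * a) * (g*b⁻¹*g⁻¹)⁻¹) * ((g*b*g⁻¹)⁻¹ * b) := by group
      rw [e]
      exact D.mul_mem (hDnormal _ hgb _ (ha g hg)) (hb g hg)
    inv_mem' := by
      rintro a ⟨haQ, ha⟩
      refine ⟨Q.inv_mem haQ, fun g hg => ?_⟩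
      have e : (g * a⁻¹ * g⁻¹)⁻¹ * a⁻¹ = a * ((g*a*g⁻¹)⁻¹ * a)⁻¹ * a⁻¹ := by group
      rw [e]
      exact hDnormal a haQ _ (D.inv_mem (ha g hg)) }
  have hWP : ∀ h ∈ P, ∀ w ∈ W, h * w * h⁻¹ ∈ W := by
    intro h hh w hw
    obtain ⟨hwQ, hwc⟩ := hw
    refine ⟨conjmem h (hPN hh) ⟨w, hwQ⟩, fun g hg => ?_⟩
    have hk : h⁻¹ * g * h ∈ P := P.mul_mem (P.mul_mem (P.inv_mem hh) hg) hh
    have e : (g * (h*w*h⁻¹) * g⁻¹)⁻¹ * (h*w*h⁻¹)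
        = h * (((h⁻¹*g*h) * w * (h⁻¹*g*h)⁻¹)⁻¹ * w) * h⁻¹ := by group
    rw [e]
    exact hDP h hh _ (hwc _ hk)
  have hWPN : P ≤ Subgroup.normalizer (W : Set G) := fun g hg => mem_normalizer_of_conj (hWP g hg)
    (fun w hw => by simpa using hWP g⁻¹ (P.inv_mem hg) w hw)
  have hWy : ∀ w ∈ W, y * w * y⁻¹ ∈ W := by
    intro w hw
    obtain ⟨hwQ, hwc⟩ := hw
    refine ⟨(Subgroup.mem_normalizer_iff.mp hyN w).mp hwQ, fun g hg => ?_⟩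
    have h1 : g * y = y * g := hyP g hg
    have h3 : y⁻¹ * g⁻¹ = g⁻¹ * y⁻¹ :=
      ((show Commute g y from h1).symm.inv_left.inv_right).eq
    have e : (g * (y*w*y⁻¹) * g⁻¹)⁻¹ * (y*w*y⁻¹) = y * ((g*w*g⁻¹)⁻¹ * w) * y⁻¹ := by
      calc (g * (y*w*y⁻¹) * g⁻¹)⁻¹ * (y*w*y⁻¹)
          = (g*y) * w⁻¹ * (y⁻¹*g⁻¹) * y * w * y⁻¹ := by group
        _ = (y*g) * w⁻¹ * (g⁻¹*y⁻¹) * y * w * y⁻¹ := by rw [h1, h3]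
        _ = y * ((g*w*g⁻¹)⁻¹ * w) * y⁻¹ := by group
    rw [e]
    exact hDyD _ (hwc g hg)
  have hWy' : ∀ w ∈ W, y⁻¹ * w * y ∈ W := by
    intro w hw
    obtain ⟨hwQ, hwc⟩ := hw
    refine ⟨by simpa using (Subgroup.mem_normalizer_iff.mp (inv_mem hyN) w).mp hwQ,
      fun g hg => ?_⟩
    have h1 : g * y = y * g := hyP g hg
    have h2 : g * y⁻¹ = y⁻¹ * g := ((show Commute g y from h1).inv_right).eq
    have h4 : y * g⁻¹ = g⁻¹ * y := ((show Commute g y from h1).symm.inv_right).eq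
    have e : (g * (y⁻¹*w*y) * g⁻¹)⁻¹ * (y⁻¹*w*y) = y⁻¹ * ((g*w*g⁻¹)⁻¹ * w) * y := by
      calc (g * (y⁻¹*w*y) * g⁻¹)⁻¹ * (y⁻¹*w*y)
          = (g*y⁻¹) * w⁻¹ * (y*g⁻¹) * y⁻¹ * w * y := by group
        _ = (y⁻¹*g) * w⁻¹ * (g⁻¹*y) * y⁻¹ * w * y := by rw [h2, h4]
        _ = y⁻¹ * ((g*w*g⁻¹)⁻¹ * w) * y := by group
    rw [e]
    exact hDy'D _ (hwc g hg)
  have hWyN : y ∈ Subgroup.normalizer (W : Set G) := mem_normalizer_of_conj hWy hWy'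
  have hWnotD : ¬ W ≤ D := fun hle => hq1D (hle ⟨hq1Q, hq1W⟩)
  have hWQ : ∀ q ∈ Q, q ∈ W := by
    by_contra hne
    push_neg at hne
    have hWlt : W < Q := lt_of_le_of_ne (fun w hw => hw.1)
      (fun h => by obtain ⟨q, hq, hqW⟩ := hne; exact hqW (h ▸ hq))
    have hcent := key W hWlt hWPN hWyN
    exact hWnotD (fun w hw => Subgroup.mem_inf.mpr ⟨hw.1, hcent hw⟩)
  -- Step C : three subgroups lemma
  have hYcent : ∀ z : G, z * y = y * z → z ∈ centralizer ((Subgroup.zpowers y : Subgroup G) : Set G) := by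
    intro z hz
    rw [mem_centralizer_iff]
    intro m hm
    obtain ⟨k, rfl⟩ := Subgroup.mem_zpowers_iff.mp hm
    exact ((show Commute z y from hz).zpow_right k).eq.symm
  have hQPle : ⁅Q, P⁆ ≤ centralizer ((Subgroup.zpowers y : Subgroup G) : Set G) := by
    rw [Subgroup.commutator_le]
    intro q hq g hg
    have h1 := (hWQ q⁻¹ (Q.inv_mem hq)).2 g hg
    have h2 : ⁅q, g⁆ = ((g * q⁻¹ * g⁻¹)⁻¹ * q⁻¹)⁻¹ := by rw [commutatorElement_def]; group
    have h3 : ⁅q, g⁆ ∈ D := h2 ▸ D.inv_mem h1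
    exact hYcent _ ((hDmem _).mp h3).2
  have hc1 : ⁅⁅Q, P⁆, Subgroup.zpowers y⁆ = ⊥ :=
    Subgroup.commutator_eq_bot_iff_le_centralizer.mpr hQPle
  have hc2 : ⁅⁅P, Subgroup.zpowers y⁆, Q⁆ = ⊥ := by
    have hPY : ⁅P, Subgroup.zpowers y⁆ = ⊥ :=
      Subgroup.commutator_eq_bot_iff_le_centralizer.mpr (fun g hg => hYcent g (hyP g hg))
    rw [hPY, Subgroup.commutator_bot_left]
  have hrot : ⁅⁅Subgroup.zpowers y, Q⁆, P⁆ = ⊥ :=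
    Subgroup.commutator_commutator_eq_bot_of_rotate hc1 hc2
  have hYQcent : ⁅Subgroup.zpowers y, Q⁆ ≤ centralizer (P : Set G) :=
    Subgroup.commutator_eq_bot_iff_le_centralizer.mp hrot
  have hYQQ : ⁅Subgroup.zpowers y, Q⁆ ≤ Q := by
    rw [Subgroup.commutator_le]
    intro a ha q hq
    have haN : a ∈ Subgroup.normalizer (Q : Set G) := (Subgroup.zpowers_le.mpr hyN) ha
    rw [commutatorElement_def]
    exact Q.mul_mem ((Subgroup.mem_normalizer_iff.mp haN q).mp hq) (Q.inv_mem hq)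
  have hYQD : ⁅Subgroup.zpowers y, Q⁆ ≤ centralizer {y} := fun z hz =>
    hC (Subgroup.mem_inf.mpr ⟨hYQQ hz, hYQcent hz⟩)
  -- Step D : conclude
  intro q hq
  rw [mem_centralizer_singleton_iff]
  have hcY : ⁅y, q⁆ ∈ ⁅Subgroup.zpowers y, Q⁆ :=
    Subgroup.commutator_mem_commutator (Subgroup.mem_zpowers y) hq
  set c := ⁅y, q⁆ with hcdef
  have hcy : c * y = y * c := mem_centralizer_singleton_iff.mp (hYQD hcY)
  have hcQ : c ∈ Q := hYQQ hcY
  have e4 : y * q * y⁻¹ = c * q := by rw [hcdef, commutatorElement_def]; group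
  have hstep : ∀ i : ℕ, y ^ i * q * (y ^ i)⁻¹ = c ^ i * q := by
    intro i
    induction i with
    | zero => simp
    | succ i ih =>
      have e1 : y ^ (i+1) * q * (y ^ (i+1))⁻¹ = y * (y ^ i * q * (y ^ i)⁻¹) * y⁻¹ := by
        simp only [pow_succ']
        group
      rw [e1, ih]
      have e3 : y * c ^ i * y⁻¹ = c ^ i := by
        have h := ((show Commute c y from hcy).symm.pow_right i).eq
        calc y * c^i * y⁻¹ = (y * c^i) * y⁻¹ := rfl
          _ = (c^i * y) * y⁻¹ := by rw [h]
          _ = c^i := by group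
      calc y * (c ^ i * q) * y⁻¹ = (y * c^i * y⁻¹) * (y * q * y⁻¹) := by group
        _ = c^i * (c * q) := by rw [e3, e4]
        _ = c^(i+1) * q := by rw [← mul_assoc, ← pow_succ]
  have hr := hstep (orderOf y)
  rw [pow_orderOf_eq_one y] at hr
  have hq' : (1:G) * q * (1:G)⁻¹ = q := by group
  rw [hq'] at hr
  have hcr : c ^ orderOf y = 1 := by
    have h6 : c ^ orderOf y * q = 1 * q := by rw [one_mul, ← hr]
    exact mul_right_cancel h6
  have hcord : orderOf c ∣ orderOf y := orderOf_dvd_of_pow_eq_one hcr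
  obtain ⟨k, hk⟩ := hQ ⟨c, hcQ⟩
  have hck : c ^ (p ^ k) = 1 := by
    have := congrArg (Subtype.val) hk
    simpa using this
  have hcord2 : orderOf c ∣ p ^ k := orderOf_dvd_of_pow_eq_one hck
  have hco : Nat.Coprime (orderOf y) (p ^ k) := hy.pow_right k
  have hdvd1 : orderOf c ∣ 1 := by
    have := Nat.dvd_gcd hcord hcord2
    rwa [Nat.Coprime.gcd_eq_one hco] at this
  have hc1' : c = 1 := orderOf_eq_one_iff.mp (Nat.dvd_one.mp hdvd1)
  have hyq : y * q * y⁻¹ = q := by rw [e4, hc1', one_mul]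
  have h5 : y * q = q * y := by
    conv_rhs => rw [← hyq]
    group
  exact h5.symm


lemma le_pCore {G : Type*} [Group G] {p : ℕ} {N : Subgroup G} (hn : N.Normal)
    (hp : IsPGroup p N) : N ≤ pCore p G :=
  le_iSup (fun H : {H : Subgroup G // H.Normal ∧ IsPGroup p H} => H.1) ⟨N, hn, hp⟩

lemma finsetSup_pgroup {G : Type*} [Group G] {p : ℕ} [Fact p.Prime]
    (s : Finset (Subgroup G)) (h : ∀ K ∈ s, K.Normal ∧ IsPGroup p K) :
    IsPGroup p (s.sup id : Subgroup G) ∧ (s.sup id : Subgroup G).Normal := by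
  classical
  induction s using Finset.induction with
  | empty => exact (⟨IsPGroup.of_bot, inferInstance⟩ : IsPGroup p (⊥ : Subgroup G) ∧ (⊥ : Subgroup G).Normal)
  | @insert a s ha ih =>
    have hih := ih (fun K hK => h K (Finset.mem_insert_of_mem hK))
    have haP := h a (Finset.mem_insert_self a s)
    haveI : (s.sup id : Subgroup G).Normal := hih.2
    haveI : (id a : Subgroup G).Normal := haP.1
    rw [Finset.sup_insert]
    exact ⟨IsPGroup.to_sup_of_normal_right haP.2 hih.1, Subgroup.sup_normal _ _⟩

lemma pCore_isPGroup {G : Type*} [Group G] [Finite G] {p : ℕ} [Fact p.Prime] :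
    IsPGroup p (pCore p G) := by
  classical
  set f : {H : Subgroup G // H.Normal ∧ IsPGroup p H} → Subgroup G := Subtype.val with hf
  have hfin : (Set.range f).Finite := Set.toFinite _
  have heq : pCore p G = hfin.toFinset.sup id := by
    rw [Finset.sup_id_eq_sSup, Set.Finite.coe_toFinset, sSup_range]
    rfl
  rw [heq]
  exact (finsetSup_pgroup _ (by
    intro K hK
    rw [Set.Finite.mem_toFinset] at hK
    obtain ⟨⟨H, hH⟩, rfl⟩ := hK
    exact hH)).1


/-- If `G` is a finite group of characteristic `p` and `P` is a `p`-subgroup of `G`, then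
`C_G(P)` is of characteristic `p`. -/
theorem isCharP_centralizer (p : ℕ) [Fact p.Prime] (G : Type*) [Group G] [Finite G]
    (hG : IsCharP p G) (P : Subgroup G) (hP : IsPGroup p P) :
    IsCharP p (Subgroup.centralizer (P : Set G)) := by
  classical
  set C : Subgroup G := Subgroup.centralizer (P : Set G) with hCdef
  set R : Subgroup ↥C := pCore p ↥C with hRdef
  set S : Subgroup ↥C := Subgroup.centralizer (R : Set ↥C) with hSdef
  show S ≤ R
  -- the p-core of G, intersected with C, sits inside R
  have hinner : ((pCore p G) ⊓ C).subgroupOf C ≤ R := by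
    refine le_pCore ?_ ?_
    · constructor
      rintro n hn c
      refine Subgroup.mem_subgroupOf.mpr ?_
      have hnmem := Subgroup.mem_subgroupOf.mp hn
      obtain ⟨hn1, hn2⟩ := Subgroup.mem_inf.mp hnmem
      refine Subgroup.mem_inf.mpr ⟨?_, ?_⟩
      · have := (pCore_normal p G).conj_mem _ hn1 (c : G)
        simpa using this
      · have : ((c * n * c⁻¹ : ↥C) : G) ∈ C := (c * n * c⁻¹).2
        simpa using this
    · have h1 : IsPGroup p ((pCore p G) ⊓ C : Subgroup G) :=
        pCore_isPGroup.to_le inf_le_left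
      exact h1.of_equiv (Subgroup.subgroupOfEquivOfLe inf_le_right).symm
  -- every element of S is a p-element
  have main : ∀ x : ↥C, x ∈ S → ∃ k : ℕ, x ^ (p ^ k) = 1 := by
    intro x hx
    set xg : G := (x : G) with hxg
    have hxC : xg ∈ C := x.2
    set v : ℕ := (orderOf xg).factorization p with hv
    set b : G := xg ^ (p ^ v) with hb
    have hbC : b ∈ C := pow_mem hxC _
    have hord_ne : orderOf xg ≠ 0 := (orderOf_pos xg).ne'
    have hb_ord : orderOf b = ordCompl[p] (orderOf xg) := by
      rw [hb, orderOf_pow, Nat.gcd_eq_right (Nat.ordProj_dvd _ _)]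
    have hb_cop : Nat.Coprime (orderOf b) p := by
      rw [hb_ord]
      exact (Nat.coprime_ordCompl (Fact.out (p := p.Prime)) hord_ne).symm
    -- b centralizes the p-core of G
    have hbcent : pCore p G ≤ Subgroup.centralizer {b} := by
      refine pxq hP hb_cop (fun g hg => ?_) (Nat.card (pCore p G)) (pCore p G) rfl
        pCore_isPGroup ?_ ?_ ?_
      · -- g * b = b * g for g ∈ P
        have hxgP : ∀ g' ∈ P, g' * xg = xg * g' := fun g' hg' => hxC g' hg'
        have : Commute g xg := hxgP g hg
        exact (this.pow_right _).eq
      · rw [Subgroup.normalizer_eq_top_iff.mpr (pCore_normal p G)]; exact le_top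
      · rw [Subgroup.normalizer_eq_top_iff.mpr (pCore_normal p G)]; exact Subgroup.mem_top _
      · -- C_{pCore}(P) ≤ centralizer {b}
        intro z hz
        obtain ⟨hz1, hz2⟩ := Subgroup.mem_inf.mp hz
        rw [Subgroup.mem_centralizer_singleton_iff]
        have hzC : z ∈ C := hz2
        have hzR : (⟨z, hzC⟩ : ↥C) ∈ R := hinner (Subgroup.mem_subgroupOf.mpr
          (Subgroup.mem_inf.mpr ⟨hz1, hzC⟩))
        have hcomm := Subgroup.mem_centralizer_iff.mp hx _ hzR
        have hcommG : z * xg = xg * z := congrArg Subtype.val hcomm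
        exact ((show Commute z xg from hcommG).pow_right _).eq
    have hbmem : b ∈ pCore p G := by
      apply hG
      rw [Subgroup.mem_centralizer_iff]
      intro m hm
      exact Subgroup.mem_centralizer_singleton_iff.mp (hbcent hm)
    obtain ⟨k, hk⟩ := pCore_isPGroup (p := p) (G := G) ⟨b, hbmem⟩
    have hbk : b ^ (p ^ k) = 1 := by
      have := congrArg Subtype.val hk
      simpa using this
    have hbord_dvd : orderOf b ∣ p ^ k := orderOf_dvd_of_pow_eq_one hbk
    have hb1 : b = 1 := by
      have hco : Nat.Coprime (orderOf b) (p ^ k) := hb_cop.pow_right k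
      have : orderOf b ∣ 1 := by
        have h2 := Nat.dvd_gcd (dvd_refl (orderOf b)) hbord_dvd
        rwa [Nat.Coprime.gcd_eq_one hco] at h2
      exact orderOf_eq_one_iff.mp (Nat.dvd_one.mp this)
    refine ⟨v, ?_⟩
    have : (x : G) ^ (p ^ v) = 1 := by rw [← hb]; exact hb1
    ext
    simpa using this
  -- S is a normal p-subgroup of C
  have hSnormal : S.Normal := by
    constructor
    intro s hs c
    rw [hSdef, Subgroup.mem_centralizer_iff]
    intro z hz
    have hz' : c⁻¹ * z * c ∈ R := by
      have := (pCore_normal p ↥C).conj_mem _ hz c⁻¹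
      simpa using this
    have h1 : (c⁻¹ * z * c) * s = s * (c⁻¹ * z * c) :=
      Subgroup.mem_centralizer_iff.mp hs _ hz'
    calc z * (c * s * c⁻¹) = c * ((c⁻¹ * z * c) * s) * c⁻¹ := by group
      _ = c * (s * (c⁻¹ * z * c)) * c⁻¹ := by rw [h1]
      _ = (c * s * c⁻¹) * z := by group
  have hSp : IsPGroup p S := by
    intro x
    obtain ⟨k, hk⟩ := main (x : ↥C) x.2
    refine ⟨k, ?_⟩
    have hcoe : ((x ^ (p ^ k) : ↥S) : ↥C) = ((1 : ↥S) : ↥C) := by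
      push_cast
      exact hk
    exact Subtype.ext hcoe
  exact le_pCore hSnormal hSp
end

section
/- Let G be a finite group and P a p-subgroup of G. Then C_G(P) is almost of characteristic p if and only if N_G(P) is almost of characteristic p. -/
variable (p : ℕ) (G : Type*) [Group G]

section Aux

open Subgroup

variable {p G}

lemma le_pCore_s15 {K : Subgroup G} (hN : K.Normal) (hK : IsPGroup p K) : K ≤ pCore p G :=
  le_iSup (fun H : {H : Subgroup G // H.Normal ∧ IsPGroup p H} => H.1) ⟨K, hN, hK⟩

lemma le_pPrimeCore {K : Subgroup G} (hN : K.Normal) (hK : Nat.Coprime (Nat.card K) p) :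
    K ≤ pPrimeCore p G :=
  le_iSup (fun H : {H : Subgroup G // H.Normal ∧ Nat.Coprime (Nat.card H) p} => H.1) ⟨K, hN, hK⟩

lemma pCore_isPGroup_s15 : IsPGroup p (pCore p G) := by
  intro x
  have hx := x.2
  have key : ∃ K : Subgroup G, K.Normal ∧ IsPGroup p K ∧ (x : G) ∈ K := by
    refine Subgroup.iSup_induction
      (C := fun g => ∃ K : Subgroup G, K.Normal ∧ IsPGroup p K ∧ g ∈ K) _ hx
      (fun i g hg => ⟨i.1, i.2.1, i.2.2, hg⟩) ?_ ?_
    · exact ⟨⊥, inferInstance, IsPGroup.of_bot, one_mem ⊥⟩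
    · rintro a b ⟨K1, h1, hp1, ha⟩ ⟨K2, h2, hp2, hb⟩
      exact ⟨K1 ⊔ K2, @Subgroup.sup_normal _ _ K1 K2 h1 h2,
        @IsPGroup.to_sup_of_normal_right _ _ _ K1 K2 hp1 hp2 h2,
        mul_mem ((le_sup_left : K1 ≤ K1 ⊔ K2) ha) ((le_sup_right : K2 ≤ K1 ⊔ K2) hb)⟩
  obtain ⟨K, _, hpK, hxK⟩ := key
  obtain ⟨k, hk⟩ := hpK ⟨(x : G), hxK⟩
  refine ⟨k, ?_⟩
  ext
  have := congrArg (Subtype.val) hk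
  simpa using this

lemma card_sup_coprime [Finite G] {K1 K2 : Subgroup G} [K2.Normal]
    (h1 : Nat.Coprime (Nat.card K1) p) (h2 : Nat.Coprime (Nat.card K2) p) :
    Nat.Coprime (Nat.card (K1 ⊔ K2 : Subgroup G)) p := by
  have key : Nat.card ↥(K1 ⊔ K2) =
      Nat.card (↥(K1 ⊔ K2) ⧸ (K2.subgroupOf (K1 ⊔ K2))) * Nat.card (K2.subgroupOf (K1 ⊔ K2)) :=
    Subgroup.card_eq_card_quotient_mul_card_subgroup _
  have e1 : Nat.card (K2.subgroupOf (K1 ⊔ K2)) = Nat.card K2 :=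
    Nat.card_congr (subgroupOfEquivOfLe le_sup_right).toEquiv
  have e2 : Nat.card (↥(K1 ⊔ K2) ⧸ K2.subgroupOf (K1 ⊔ K2)) ∣ Nat.card K1 := by
    rw [← Nat.card_congr (QuotientGroup.quotientInfEquivProdNormalQuotient K1 K2).toEquiv]
    exact Subgroup.card_quotient_dvd_card _
  rw [key]
  exact Nat.Coprime.mul (Nat.Coprime.coprime_dvd_left e2 h1) (e1 ▸ h2)

lemma pPrimeCore_orderOf_coprime [Finite G] {x : G} (hx : x ∈ pPrimeCore p G) :
    Nat.Coprime (orderOf x) p := by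
  have key : ∃ K : Subgroup G, K.Normal ∧ Nat.Coprime (Nat.card K) p ∧ x ∈ K := by
    refine Subgroup.iSup_induction
      (C := fun g => ∃ K : Subgroup G, K.Normal ∧ Nat.Coprime (Nat.card K) p ∧ g ∈ K) _ hx
      (fun i g hg => ⟨i.1, i.2.1, i.2.2, hg⟩) ?_ ?_
    · exact ⟨⊥, inferInstance, by rw [Subgroup.card_bot]; exact Nat.coprime_one_left p,
        one_mem ⊥⟩
    · rintro a b ⟨K1, h1, hp1, ha⟩ ⟨K2, h2, hp2, hb⟩
      exact ⟨K1 ⊔ K2, @Subgroup.sup_normal _ _ K1 K2 h1 h2,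
        @card_sup_coprime p _ _ _ K1 K2 h2 hp1 hp2,
        mul_mem ((le_sup_left : K1 ≤ K1 ⊔ K2) ha) ((le_sup_right : K2 ≤ K1 ⊔ K2) hb)⟩
  obtain ⟨K, _, hpK, hxK⟩ := key
  have : orderOf x ∣ Nat.card K := by
    rw [← Subgroup.orderOf_mk (H := K) x hxK]
    exact orderOf_dvd_natCard _
  exact Nat.Coprime.coprime_dvd_left this hpK

lemma pPrimeCore_card_coprime [Finite G] (hp : p.Prime) :
    Nat.Coprime (Nat.card (pPrimeCore p G)) p := by
  rw [Nat.coprime_comm, hp.coprime_iff_not_dvd]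
  intro hdvd
  haveI : Fact p.Prime := ⟨hp⟩
  haveI := Fintype.ofFinite (pPrimeCore p G : Subgroup G)
  rw [Nat.card_eq_fintype_card] at hdvd
  obtain ⟨g, hg⟩ := exists_prime_orderOf_dvd_card (G := (pPrimeCore p G : Subgroup G)) p hdvd
  have h1 : Nat.Coprime (orderOf (g : G)) p := pPrimeCore_orderOf_coprime g.2
  rw [Subgroup.orderOf_coe g, hg] at h1
  have := Nat.Coprime.eq_one_of_dvd h1 dvd_rfl
  exact hp.one_lt.ne' this

end Aux

section Aux2

open Subgroup

variable {p : ℕ} {G : Type*} [Group G] {G' : Type*} [Group G']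

lemma map_pCore_le (e : G ≃* G') : map e.toMonoidHom (pCore p G) ≤ pCore p G' := by
  rw [pCore, (Subgroup.gc_map_comap e.toMonoidHom).l_iSup]
  refine iSup_le fun i => le_pCore_s15 (i.2.1.map _ e.surjective) (i.2.2.map _)


lemma le_map_of_map_symm_le {S : Subgroup G'} {T : Subgroup G} (e : G ≃* G')
    (h : map e.symm.toMonoidHom S ≤ T) : S ≤ map e.toMonoidHom T := fun x hx =>
  ⟨e.symm x, h ⟨x, hx, rfl⟩, by simp⟩

lemma map_pCore (e : G ≃* G') : map e.toMonoidHom (pCore p G) = pCore p G' := by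
  refine le_antisymm (map_pCore_le e) ?_
  exact le_map_of_map_symm_le e (map_pCore_le (p := p) e.symm)

lemma map_pPrimeCore_le [Finite G] (e : G ≃* G') :
    map e.toMonoidHom (pPrimeCore p G) ≤ pPrimeCore p G' := by
  rw [pPrimeCore, (Subgroup.gc_map_comap e.toMonoidHom).l_iSup]
  refine iSup_le fun i => le_pPrimeCore (i.2.1.map _ e.surjective) ?_
  rw [← Nat.card_congr (Subgroup.equivMapOfInjective i.1 e.toMonoidHom e.injective).toEquiv]
  exact i.2.2

lemma map_pPrimeCore [Finite G] (e : G ≃* G') :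
    map e.toMonoidHom (pPrimeCore p G) = pPrimeCore p G' := by
  haveI : Finite G' := Finite.of_equiv G e.toEquiv
  refine le_antisymm (map_pPrimeCore_le e) ?_
  exact le_map_of_map_symm_le e (map_pPrimeCore_le (p := p) e.symm)

/-- A subgroup of a normal subgroup that is invariant under all automorphisms is normal
in the ambient group. -/
lemma map_subtype_normal {K : Subgroup G} [K.Normal] {S : Subgroup ↥K}
    (hchar : ∀ e : ↥K ≃* ↥K, map e.toMonoidHom S = S) : (map K.subtype S).Normal := by
  constructor
  intro n hn g
  obtain ⟨x, hxS, rfl⟩ := hn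
  refine ⟨(MulAut.conjNormal g) x, ?_, ?_⟩
  · rw [← hchar (MulAut.conjNormal g : MulAut ↥K)]
    exact mem_map_of_mem _ hxS
  · simp [MulAut.conjNormal_apply]

lemma centralizer_normal {P : Subgroup G} [hPn : P.Normal] :
    (Subgroup.centralizer (P : Set G)).Normal := by
  constructor
  intro c hc g
  rw [Subgroup.mem_centralizer_iff] at hc ⊢
  intro u hu
  have h1 : g⁻¹ * u * g ∈ P := by
    have := hPn.conj_mem u hu g⁻¹
    simpa [mul_assoc] using this
  calc u * (g * c * g⁻¹) = g * ((g⁻¹ * u * g) * c) * g⁻¹ := by group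
    _ = g * (c * (g⁻¹ * u * g)) * g⁻¹ := by rw [hc _ h1]
    _ = (g * c * g⁻¹) * u := by group

lemma centralizer_le_normalizer' {P : Subgroup G} :
    Subgroup.centralizer (P : Set G) ≤ Subgroup.normalizer (P : Set G) := by
  intro c hc
  rw [Subgroup.mem_centralizer_iff] at hc
  rw [Subgroup.mem_normalizer_iff]
  intro u
  constructor
  · intro hu
    have h := hc u hu
    have : c * u * c⁻¹ = u := by rw [← h]; group
    rwa [this]
  · intro hu
    have h := hc _ hu
    have key : u = c * u * c⁻¹ := by
      calc u = c⁻¹ * (c * u * c⁻¹ * c) := by group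
        _ = c⁻¹ * (c * (c * u * c⁻¹)) := by rw [h]
        _ = c * u * c⁻¹ := by group
    rw [key]
    exact hu

lemma map_centralizer (e : G ≃* G') (s : Set G) :
    map e.toMonoidHom (Subgroup.centralizer s) = Subgroup.centralizer (e '' s) := by
  ext y
  simp only [mem_map, Subgroup.mem_centralizer_iff]
  constructor
  · rintro ⟨x, hx, rfl⟩ h ⟨u, hu, rfl⟩
    show e u * e x = e x * e u
    rw [← map_mul, ← map_mul, hx u hu]
  · intro hy
    refine ⟨e.symm y, ?_, by simp⟩
    intro u hu
    have h := hy (e u) ⟨u, hu, rfl⟩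
    apply e.injective
    simpa [map_mul] using h

lemma isCharP_of_equiv (e : G ≃* G') (h : IsCharP p G) : IsCharP p G' := by
  unfold IsCharP at h ⊢
  have hc : Subgroup.centralizer ((pCore p G' : Subgroup G') : Set G')
      = map e.toMonoidHom (Subgroup.centralizer ((pCore p G : Subgroup G) : Set G)) := by
    rw [map_centralizer]
    congr 1
    rw [← map_pCore (p := p) e, Subgroup.coe_map]
    rfl
  rw [hc, ← map_pCore (p := p) e]
  exact map_le_map_iff_of_injective e.injective |>.mpr h

lemma isCharP_congr (e : G ≃* G') : IsCharP p G ↔ IsCharP p G' :=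
  ⟨isCharP_of_equiv e, isCharP_of_equiv e.symm⟩

lemma isAlmostCharP_congr [Finite G] (e : G ≃* G') : IsAlmostCharP p G ↔ IsAlmostCharP p G' :=
  isCharP_congr (QuotientGroup.congr (pPrimeCore p G) (pPrimeCore p G') e (map_pPrimeCore e))

end Aux2

section Aux3

open Subgroup

variable {p : ℕ} {G : Type*} [Group G]

/-- p'-part of an element: some power `y = x ^ p ^ a` of `x` has order coprime to `p`,
and if `y = 1` then `x` has `p`-power order. -/
lemma exists_pPrimePart [Finite G] (hp : p.Prime) (x : G) :
    ∃ a : ℕ, Nat.Coprime (orderOf (x ^ p ^ a)) p := by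
  have hn : orderOf x ≠ 0 := (orderOf_pos x).ne'
  refine ⟨(orderOf x).factorization p, ?_⟩
  have hdvd : p ^ (orderOf x).factorization p ∣ orderOf x := Nat.ordProj_dvd _ _
  rw [orderOf_pow' x (pow_ne_zero _ hp.pos.ne'), Nat.gcd_eq_right hdvd, Nat.coprime_comm]
  exact Nat.coprime_ordCompl hp hn

/-- The centralizer of the image of a `p`-subgroup in the quotient by a normal subgroup of
coprime order is the image of the centralizer. -/
lemma centralizer_map_quotient [Finite G] [Fact p.Prime] {P : Subgroup G} (hP : IsPGroup p P)
    {D : Subgroup G} [D.Normal] (hD : Nat.Coprime (Nat.card D) p) :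
    Subgroup.centralizer ((Subgroup.map (QuotientGroup.mk' D) P : Subgroup (G ⧸ D)) : Set (G ⧸ D))
      = Subgroup.map (QuotientGroup.mk' D) (Subgroup.centralizer (P : Set G)) := by
  apply le_antisymm
  · intro xb hxb
    rw [Subgroup.mem_centralizer_iff] at hxb
    obtain ⟨x, rfl⟩ := QuotientGroup.mk'_surjective D xb
    -- for every u ∈ P, u⁻¹ * x⁻¹ * u * x ∈ D
    have hcomm : ∀ u ∈ P, x⁻¹ * u * x * u⁻¹ ∈ D := by
      intro u hu
      have h := hxb (QuotientGroup.mk' D u) (mem_map_of_mem _ hu)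
      have h2 : QuotientGroup.mk' D (u * x) = QuotientGroup.mk' D (x * u) := by
        rw [map_mul, map_mul, h]
      have h3 : (u * x)⁻¹ * (x * u) ∈ D := (QuotientGroup.eq (s := D) (a := u * x) (b := x * u)).mp h2
      have h4 : u * ((u * x)⁻¹ * (x * u)) * u⁻¹ ∈ D :=
        Subgroup.Normal.conj_mem ‹D.Normal› _ h3 u
      have he : x⁻¹ * u * x * u⁻¹ = (u * ((u * x)⁻¹ * (x * u)) * u⁻¹)⁻¹ := by group
      rw [he]
      exact inv_mem h4
    -- action of P on D modelling conjugation action on the coset x⁻¹D... we use xD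
    let act : ↥P → ↥D → ↥D := fun u d =>
      ⟨x⁻¹ * ((u : G) * (x * (d : G)) * (u : G)⁻¹), by
        have he : x⁻¹ * ((u : G) * (x * (d : G)) * (u : G)⁻¹)
            = (x⁻¹ * u * x * (u : G)⁻¹) * ((u : G) * d * (u : G)⁻¹) := by group
        rw [he]
        exact mul_mem (hcomm u u.2) (Subgroup.Normal.conj_mem ‹D.Normal› _ d.2 u)⟩
    letI : SMul ↥P ↥D := ⟨act⟩
    have smul_def : ∀ (u : ↥P) (d : ↥D),
        ((u • d : ↥D) : G) = x⁻¹ * ((u : G) * (x * (d : G)) * (u : G)⁻¹) := fun u d => rfl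
    letI : MulAction ↥P ↥D :=
      { one_smul := fun d => by
          ext
          rw [smul_def]
          simp [mul_assoc]
        mul_smul := fun u v d => by
          ext
          rw [smul_def, smul_def, smul_def]
          push_cast
          group }
    have hfix : (MulAction.fixedPoints ↥P ↥D).Nonempty := by
      refine hP.nonempty_fixed_point_of_prime_not_dvd_card ↥D ?_
      rw [← Nat.Prime.coprime_iff_not_dvd Fact.out, Nat.coprime_comm]
      exact hD
    obtain ⟨d₀, hd₀⟩ := hfix
    have hy : x * (d₀ : G) ∈ Subgroup.centralizer (P : Set G) := by
      rw [Subgroup.mem_centralizer_iff]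
      intro u hu
      have h := hd₀ (⟨u, hu⟩ : ↥P)
      have h2 := congrArg (Subtype.val) h
      rw [smul_def] at h2
      -- h2 : x⁻¹ * (u * (x * d₀) * u⁻¹) = d₀
      have : u * (x * (d₀ : G)) * u⁻¹ = x * (d₀ : G) := by
        have := congrArg (fun z => x * z) h2
        simpa [mul_assoc] using this
      calc u * (x * (d₀ : G)) = (u * (x * (d₀ : G)) * u⁻¹) * u := by group
        _ = x * (d₀ : G) * u := by rw [this]
    refine ⟨x * (d₀ : G), hy, ?_⟩
    show QuotientGroup.mk' D (x * (d₀ : G)) = QuotientGroup.mk' D x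
    refine (QuotientGroup.eq (s := D) (a := x * (d₀ : G)) (b := x)).mpr ?_
    have he : (x * (d₀ : G))⁻¹ * x = (d₀ : G)⁻¹ := by group
    rw [he]
    exact inv_mem d₀.2
  · rintro xb ⟨c, hc, rfl⟩
    rw [SetLike.mem_coe, Subgroup.mem_centralizer_iff] at hc
    rw [Subgroup.mem_centralizer_iff]
    rintro ub ⟨u, hu, rfl⟩
    show QuotientGroup.mk' D u * QuotientGroup.mk' D c = QuotientGroup.mk' D c * QuotientGroup.mk' D u
    rw [← map_mul, ← map_mul, hc u hu]

end Aux3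

section Core

open Subgroup

variable {p : ℕ} {K : Type*} [Group K]

lemma isCharP_of_centralizer [Finite K] {P : Subgroup K} [P.Normal] (hP : IsPGroup p P)
    (h : IsCharP p ↥(Subgroup.centralizer (P : Set K))) : IsCharP p K := by
  set C := Subgroup.centralizer (P : Set K) with hC
  haveI hCn : C.Normal := centralizer_normal
  intro z hz
  have hzq : ∀ q ∈ pCore p K, q * z = z * q := Subgroup.mem_centralizer_iff.mp hz
  have hPQ : P ≤ pCore p K := le_pCore_s15 ‹P.Normal› hP
  have hR'N : (map C.subtype (pCore p ↥C)).Normal :=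
    map_subtype_normal (fun e => map_pCore e)
  have hR'Q : map C.subtype (pCore p ↥C) ≤ pCore p K :=
    le_pCore_s15 hR'N ((pCore_isPGroup_s15).map _)
  have hzC : z ∈ C := Subgroup.mem_centralizer_iff.mpr (fun u hu => hzq u (hPQ hu))
  have hzcent : (⟨z, hzC⟩ : ↥C) ∈
      Subgroup.centralizer ((pCore p ↥C : Subgroup ↥C) : Set ↥C) := by
    rw [Subgroup.mem_centralizer_iff]
    intro ht htmem
    have h1 : (ht : K) ∈ map C.subtype (pCore p ↥C) := mem_map_of_mem _ htmem
    have h2 := hzq _ (hR'Q h1)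
    ext
    exact h2
  have h3 : (⟨z, hzC⟩ : ↥C) ∈ pCore p ↥C := h hzcent
  exact hR'Q (mem_map_of_mem _ h3)

lemma isCharP_normal_subgroup [Finite K] (hp : p.Prime) {C : Subgroup K} [hCn : C.Normal]
    (h : IsCharP p K) : IsCharP p ↥C := by
  have hQC : (pCore p K ⊓ C).subgroupOf C ≤ pCore p ↥C := by
    refine le_pCore_s15 ?_ ?_
    · constructor
      rintro ⟨n, hnC⟩ hn g
      rw [mem_subgroupOf] at hn ⊢
      rcases hn with ⟨hnQ, hnC'⟩
      have hgn : ((g * (⟨n, hnC⟩ : ↥C) * g⁻¹ : ↥C) : K) = (g : K) * n * (g : K)⁻¹ := rfl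
      rw [hgn, Subgroup.mem_inf]
      exact ⟨(pCore_normal p K).conj_mem n hnQ (g : K),
        mul_mem (mul_mem (SetLike.coe_mem g) hnC') (inv_mem (SetLike.coe_mem g))⟩
    · exact ((pCore_isPGroup_s15).to_le inf_le_left).of_equiv (subgroupOfEquivOfLe inf_le_right).symm
  have key : ∀ xt : ↥C, xt ∈ Subgroup.centralizer ((pCore p ↥C : Subgroup ↥C) : Set ↥C) →
      ∃ k : ℕ, xt ^ p ^ k = 1 := by
    intro xt hxt
    rw [Subgroup.mem_centralizer_iff] at hxt
    obtain ⟨a, ha⟩ := exists_pPrimePart hp (xt : K)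
    set x : K := (xt : K) with hx
    set y : K := x ^ p ^ a with hy
    set m := orderOf y with hm
    have hyC : y ∈ C := pow_mem xt.2 _
    -- y centralizes the p-core of K
    have hyQ : ∀ q ∈ pCore p K, y * q = q * y := by
      intro q hq
      set f : K := q⁻¹ * (y * q * y⁻¹) with hf
      have hfQ : f ∈ pCore p K := by
        rw [hf]
        exact mul_mem (inv_mem hq) ((pCore_normal p K).conj_mem q hq y)
      have hfC : f ∈ C := by
        have h1 : q⁻¹ * y * q ∈ C := by
          have := hCn.conj_mem y hyC q⁻¹
          simpa [mul_assoc] using this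
        have he : f = (q⁻¹ * y * q) * y⁻¹ := by rw [hf]; group
        rw [he]
        exact mul_mem h1 (inv_mem hyC)
      have hcommxf : Commute f x := by
        have hfin : (⟨f, hfC⟩ : ↥C) ∈ pCore p ↥C := hQC (mem_subgroupOf.mpr ⟨hfQ, hfC⟩)
        have h2 := hxt _ hfin
        exact congrArg Subtype.val h2
      have hcommyf : Commute y f := ((hcommxf.symm).pow_left _)
      have hstep : ∀ k : ℕ, y ^ k * q * (y ^ k)⁻¹ = q * f ^ k := by
        intro k
        induction k with
        | zero => simp
        | succ k ih =>
          have e1 : y ^ (k + 1) * q * (y ^ (k + 1))⁻¹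
              = y * (y ^ k * q * (y ^ k)⁻¹) * y⁻¹ := by
            rw [pow_succ']; group
          rw [e1, ih]
          have e2 : y * (q * f ^ k) * y⁻¹ = (y * q * y⁻¹) * (y * f ^ k * y⁻¹) := by group
          have e3 : y * f ^ k * y⁻¹ = f ^ k := by
            have := (hcommyf.pow_right k).eq
            rw [this]; group
          have e4 : y * q * y⁻¹ = q * f := by rw [hf]; group
          rw [e2, e3, e4, mul_assoc, ← pow_succ']
      have hfm : f ^ m = 1 := by
        have := hstep m
        rw [hm] at this ⊢
        rw [pow_orderOf_eq_one] at this
        have h5 : q = q * f ^ orderOf y := by simpa using this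
        have := congrArg (fun z => q⁻¹ * z) h5
        simpa [mul_assoc] using this.symm
      have hford : orderOf f ∣ m := orderOf_dvd_of_pow_eq_one hfm
      have hfp : ∃ j, f ^ p ^ j = 1 := by
        obtain ⟨j, hj⟩ := pCore_isPGroup_s15 (⟨f, hfQ⟩ : ↥(pCore p K))
        exact ⟨j, by simpa [Subtype.ext_iff] using congrArg Subtype.val hj⟩
      have hf1 : f = 1 := by
        obtain ⟨j, hj⟩ := hfp
        have hd1 : orderOf f ∣ p ^ j := orderOf_dvd_of_pow_eq_one hj
        have hc1 : Nat.Coprime (orderOf f) p := Nat.Coprime.coprime_dvd_left hford ha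
        have := Nat.Coprime.eq_one_of_dvd (hc1.pow_right j) hd1
        exact orderOf_eq_one_iff.mp this
      have : y * q * y⁻¹ = q := by
        have e4 : y * q * y⁻¹ = q * f := by rw [hf]; group
        rw [e4, hf1, mul_one]
      calc y * q = (y * q * y⁻¹) * y := by group
        _ = q * y := by rw [this]
    have hymem : y ∈ pCore p K := by
      refine h ?_
      rw [Subgroup.mem_centralizer_iff]
      exact fun q hq => (hyQ q hq).symm
    have hy1 : y = 1 := by
      obtain ⟨j, hj⟩ := pCore_isPGroup_s15 (⟨y, hymem⟩ : ↥(pCore p K))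
      have hd1 : orderOf y ∣ p ^ j :=
        orderOf_dvd_of_pow_eq_one (by simpa [Subtype.ext_iff] using congrArg Subtype.val hj)
      have := Nat.Coprime.eq_one_of_dvd (ha.pow_right j) hd1
      exact orderOf_eq_one_iff.mp this
    exact ⟨a, by ext; simpa [hy] using hy1⟩
  haveI : (Subgroup.centralizer ((pCore p ↥C : Subgroup ↥C) : Set ↥C)).Normal :=
    centralizer_normal
  refine le_pCore_s15 this ?_
  intro g
  obtain ⟨k, hk⟩ := key (g : ↥C) g.2
  exact ⟨k, by ext; simpa [Subtype.ext_iff] using congrArg Subtype.val hk⟩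

end Core

section Main

open Subgroup

variable {p : ℕ} {H : Type*} [Group H]

lemma main_iff [Finite H] [Fact p.Prime] {P : Subgroup H} [hPn : P.Normal]
    (hP : IsPGroup p P) :
    IsAlmostCharP p ↥(Subgroup.centralizer (P : Set H)) ↔ IsAlmostCharP p H := by
  set C := Subgroup.centralizer (P : Set H) with hCdef
  haveI : C.Normal := centralizer_normal
  set D := pPrimeCore p H with hDdef
  have hDcop : Nat.Coprime (Nat.card D) p := pPrimeCore_card_coprime Fact.out
  have hDC : D ≤ C := by
    intro x hx
    rw [hCdef, Subgroup.mem_centralizer_iff]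
    intro u hu
    have hc1 : u⁻¹ * x⁻¹ * u * x ∈ D := by
      have h1 : u⁻¹ * x⁻¹ * (u⁻¹)⁻¹ ∈ D := (pPrimeCore_normal p H).conj_mem _ (inv_mem hx) u⁻¹
      have he : u⁻¹ * x⁻¹ * u * x = (u⁻¹ * x⁻¹ * (u⁻¹)⁻¹) * x := by group
      rw [he]
      exact mul_mem h1 hx
    have hc2 : u⁻¹ * x⁻¹ * u * x ∈ P := by
      have h1 : x⁻¹ * u * (x⁻¹)⁻¹ ∈ P := hPn.conj_mem u hu x⁻¹
      have he : u⁻¹ * x⁻¹ * u * x = u⁻¹ * (x⁻¹ * u * (x⁻¹)⁻¹) := by group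
      rw [he]
      exact mul_mem (inv_mem hu) h1
    have hc3 : u⁻¹ * x⁻¹ * u * x = 1 := by
      have ho1 : Nat.Coprime (orderOf (u⁻¹ * x⁻¹ * u * x)) p := pPrimeCore_orderOf_coprime hc1
      obtain ⟨k, hk⟩ := hP ⟨_, hc2⟩
      have hd : orderOf (u⁻¹ * x⁻¹ * u * x) ∣ p ^ k :=
        orderOf_dvd_of_pow_eq_one (by simpa [Subtype.ext_iff] using congrArg Subtype.val hk)
      have := Nat.Coprime.eq_one_of_dvd (ho1.pow_right k) hd
      exact orderOf_eq_one_iff.mp this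
    calc u * x = (x * u) * (u⁻¹ * x⁻¹ * u * x) := by group
      _ = x * u := by rw [hc3, mul_one]
  have hDeq : D.subgroupOf C = pPrimeCore p ↥C := by
    apply le_antisymm
    · refine le_pPrimeCore Subgroup.normal_subgroupOf ?_
      rw [Nat.card_congr (subgroupOfEquivOfLe hDC).toEquiv]
      exact hDcop
    · have h1 : map C.subtype (pPrimeCore p ↥C) ≤ D := by
        refine le_pPrimeCore (map_subtype_normal (fun e => map_pPrimeCore e)) ?_
        rw [← Nat.card_congr
          (Subgroup.equivMapOfInjective _ C.subtype Subtype.coe_injective).toEquiv]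
        exact pPrimeCore_card_coprime Fact.out
      intro g hg
      exact mem_subgroupOf.mpr (h1 (mem_map_of_mem _ hg))
  set π := QuotientGroup.mk' D with hπ
  set φ : ↥C →* H ⧸ D := π.comp C.subtype with hφ
  have hker : φ.ker = pPrimeCore p ↥C := by
    rw [← hDeq]
    ext g
    simp only [hφ, MonoidHom.mem_ker, MonoidHom.comp_apply, mem_subgroupOf]
    rw [hπ]
    exact QuotientGroup.eq_one_iff _
  have hrange : φ.range = map π C := by
    rw [hφ, MonoidHom.range_comp, Subgroup.range_subtype]
  let e1 : (↥C ⧸ pPrimeCore p ↥C) ≃* ↥(map π C) :=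
    (QuotientGroup.quotientMulEquivOfEq hker.symm).trans
      ((QuotientGroup.quotientKerEquivRange φ).trans (MulEquiv.subgroupCongr hrange))
  have hcent : Subgroup.centralizer ((map π P : Subgroup (H ⧸ D)) : Set (H ⧸ D)) = map π C :=
    centralizer_map_quotient hP hDcop
  haveI : (map π P).Normal := hPn.map π (QuotientGroup.mk'_surjective D)
  have hPbar : IsPGroup p (map π P) := hP.map π
  constructor
  · intro h
    have h2 : IsCharP p ↥(map π C) := isCharP_of_equiv e1 h
    have h3 : IsCharP p
        ↥(Subgroup.centralizer ((map π P : Subgroup (H ⧸ D)) : Set (H ⧸ D))) := by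
      rw [hcent]; exact h2
    exact isCharP_of_centralizer hPbar h3
  · intro h
    have h0 : IsCharP p (H ⧸ D) := h
    have h2 : IsCharP p ↥(map π C) := by
      rw [← hcent]
      haveI : (Subgroup.centralizer
          ((map π P : Subgroup (H ⧸ D)) : Set (H ⧸ D))).Normal := centralizer_normal
      exact isCharP_normal_subgroup Fact.out h0
    exact isCharP_of_equiv e1.symm h2

end Main

/-- Let `G` be a finite group and `P` a `p`-subgroup of `G`. Then `C_G(P)` is almost of
characteristic `p` if and only if `N_G(P)` is almost of characteristic `p`. -/
theorem isAlmostCharP_centralizer_iff_normalizer (p : ℕ) [Fact p.Prime]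
    (G : Type*) [Group G] [Finite G] (P : Subgroup G) (hP : IsPGroup p P) :
    IsAlmostCharP p (Subgroup.centralizer (P : Set G)) ↔ IsAlmostCharP p (Subgroup.normalizer (P : Set G)) := by
  set N := Subgroup.normalizer (P : Set G) with hN
  set P0 := P.subgroupOf N with hP0
  haveI : P0.Normal := Subgroup.normal_in_normalizer
  have hP0p : IsPGroup p ↥P0 :=
    hP.of_equiv (Subgroup.subgroupOfEquivOfLe Subgroup.le_normalizer).symm
  have hmain := main_iff (p := p) (H := ↥N) hP0p
  have hceq : Subgroup.map N.subtype (Subgroup.centralizer ((P0 : Subgroup ↥N) : Set ↥N))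
      = Subgroup.centralizer (P : Set G) := by
    apply le_antisymm
    · rintro x ⟨c, hc, rfl⟩
      rw [SetLike.mem_coe, Subgroup.mem_centralizer_iff] at hc
      rw [Subgroup.mem_centralizer_iff]
      intro u hu
      have hu0 : (⟨u, Subgroup.le_normalizer hu⟩ : ↥N) ∈ P0 := Subgroup.mem_subgroupOf.mpr hu
      exact congrArg Subtype.val (hc _ hu0)
    · intro x hx
      have hxN : x ∈ N := centralizer_le_normalizer' hx
      refine ⟨⟨x, hxN⟩, ?_, rfl⟩
      rw [SetLike.mem_coe, Subgroup.mem_centralizer_iff]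
      intro u hu
      rw [SetLike.mem_coe, hP0, Subgroup.mem_subgroupOf] at hu
      exact Subtype.ext (Subgroup.mem_centralizer_iff.mp hx _ hu)
  let e : ↥(Subgroup.centralizer ((P0 : Subgroup ↥N) : Set ↥N))
      ≃* ↥(Subgroup.centralizer (P : Set G)) :=
    (Subgroup.equivMapOfInjective _ N.subtype Subtype.coe_injective).trans
      (MulEquiv.subgroupCongr hceq)
  exact (isAlmostCharP_congr e.symm).trans hmain
end
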